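/- If N is a normal network that is not a phylogenetic tree, then there exists a 2-element subset {u, ũ} of its leaves such that the restriction N|{u, ũ} is not a normal network. Consequently, the largest closed subclass of the class of normal networks is the class of phylogenetic trees. -/

import Mathlib

open scoped Classical

/- A binary phylogenetic network, encoded as a finite directed (multi)graph on a subset of ℕ.
Leaves are identified with their labels.  The multiset of edges allows parallel edges to
arise (temporarily) during the suppression process that defines leaf restriction. -/
structure PhyloNet where
  verts : Finset ℕ
  edges : Multiset (ℕ × ℕ)
  root : ℕ

namespace PhyloNet

noncomputable def outdeg (N : PhyloNet) (v : ℕ) : ℕ :=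
  (N.edges.filter fun e => e.1 = v).card

noncomputable def indeg (N : PhyloNet) (v : ℕ) : ℕ :=
  (N.edges.filter fun e => e.2 = v).card

/-- The set of leaves (vertices of out-degree 0). -/
noncomputable def leaves (N : PhyloNet) : Finset ℕ :=
  N.verts.filter fun v => N.outdeg v = 0

/-- A (directed) walk, given as its list of successive vertices. -/
def IsWalk (N : PhyloNet) (l : List ℕ) : Prop :=
  l ≠ [] ∧ l.Chain' fun a b => (a, b) ∈ N.edges

def IsWalkFromTo (N : PhyloNet) (u v : ℕ) (l : List ℕ) : Prop :=
  N.IsWalk l ∧ l.head? = some u ∧ l.getLast? = some v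

def Reaches (N : PhyloNet) (u v : ℕ) : Prop :=
  ∃ l, N.IsWalkFromTo u v l

/-- Binary phylogenetic network: a simple DAG whose root (top of the ancestral root edge)
has in-degree 0 and out-degree 1, every other non-leaf vertex is a tree vertex
(in-degree 1, out-degree 2) or a reticulation (in-degree 2, out-degree 1), every leaf has
in-degree 1, and every vertex is reachable from the root. -/
def IsPhyloNetwork (N : PhyloNet) : Prop :=
  N.root ∈ N.verts ∧
  (∀ e ∈ N.edges, e.1 ∈ N.verts ∧ e.2 ∈ N.verts ∧ e.1 ≠ e.2) ∧
  N.edges.Nodup ∧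
  (∀ v, ¬ ∃ l, N.IsWalkFromTo v v l ∧ 2 ≤ l.length) ∧
  N.indeg N.root = 0 ∧ N.outdeg N.root = 1 ∧
  (∀ v ∈ N.verts, v ≠ N.root → N.outdeg v ≠ 0 →
    (N.indeg v = 1 ∧ N.outdeg v = 2) ∨ (N.indeg v = 2 ∧ N.outdeg v = 1)) ∧
  (∀ v ∈ N.verts, N.outdeg v = 0 → N.indeg v = 1) ∧
  (∀ v ∈ N.verts, N.Reaches N.root v)

def IsReticulation (N : PhyloNet) (v : ℕ) : Prop :=
  v ∈ N.verts ∧ N.indeg v = 2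

/-- Tree-child: every non-leaf vertex has a child that is not a reticulation. -/
def IsTreeChild (N : PhyloNet) : Prop :=
  ∀ v ∈ N.verts, N.outdeg v ≠ 0 → ∃ e ∈ N.edges, e.1 = v ∧ N.indeg e.2 ≤ 1

/-- A reticulation cycle (gall): two distinct internally-disjoint directed paths from a
common top tree vertex s to a common bottom reticulation t. -/
def IsGall (N : PhyloNet) (s t : ℕ) (p q : List ℕ) : Prop :=
  N.IsWalkFromTo s t p ∧ N.IsWalkFromTo s t q ∧ p.Nodup ∧ q.Nodup ∧
  2 ≤ p.length ∧ 2 ≤ q.length ∧ p ≠ q ∧ N.IsReticulation t ∧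
  (∀ x, x ∈ p → x ∈ q → x = s ∨ x = t)

/-- The edges of a walk. -/
def walkEdges (l : List ℕ) : Finset (ℕ × ℕ) :=
  (l.zip l.tail).toFinset

def gallEdges (p q : List ℕ) : Finset (ℕ × ℕ) :=
  walkEdges p ∪ walkEdges q

/-- Galled network: every reticulation lies in exactly one reticulation cycle
(uniqueness up to the edge set of the cycle). -/
def IsGalled (N : PhyloNet) : Prop :=
  ∀ r, N.IsReticulation r →
    ∃ s t p q, N.IsGall s t p q ∧ (r ∈ p ∨ r ∈ q) ∧
      ∀ s' t' p' q', N.IsGall s' t' p' q' → (r ∈ p' ∨ r ∈ q') →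
        gallEdges p' q' = gallEdges p q

/-- Galled tree: a galled network whose reticulation cycles are edge-disjoint. -/
def IsGalledTree (N : PhyloNet) : Prop :=
  N.IsGalled ∧
  ∀ s t p q s' t' p' q', N.IsGall s t p q → N.IsGall s' t' p' q' →
    gallEdges p q ≠ gallEdges p' q' → Disjoint (gallEdges p q) (gallEdges p' q')

/-- The subgraph of all vertices and edges lying on some path from the root to a leaf
in Y (equivalently, vertices from which some member of Y is reachable). -/
noncomputable def inducedOn (N : PhyloNet) (Y : Finset ℕ) : PhyloNet where
  verts := N.verts.filter fun v => ∃ y ∈ Y, N.Reaches v y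
  edges := N.edges.filter fun e =>
    (e.1 ∈ N.verts.filter fun v => ∃ y ∈ Y, N.Reaches v y) ∧
    (e.2 ∈ N.verts.filter fun v => ∃ y ∈ Y, N.Reaches v y)
  root := N.root

/-- One simplification step: suppress a non-root vertex of in-degree 1 and out-degree 1,
or collapse a double edge. -/
def Step (N M : PhyloNet) : Prop :=
  (∃ u v w, v ∈ N.verts ∧ v ≠ N.root ∧ N.indeg v = 1 ∧ N.outdeg v = 1 ∧
      (u, v) ∈ N.edges ∧ (v, w) ∈ N.edges ∧
      M.verts = N.verts.erase v ∧ M.root = N.root ∧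
      M.edges = (u, w) ::ₘ ((N.edges.erase (u, v)).erase (v, w))) ∨
  (∃ u w, 2 ≤ Multiset.count (u, w) N.edges ∧
      M.verts = N.verts ∧ M.root = N.root ∧ M.edges = N.edges.erase (u, w))

def IsReduced (N : PhyloNet) : Prop := ∀ M, ¬ Step N M

/-- `M` is the restriction `N|Y`: the result of repeatedly suppressing degree-(1,1)
vertices and double edges in the subgraph of N above Y, until none remain. -/
noncomputable def IsRestriction (N : PhyloNet) (Y : Finset ℕ) (M : PhyloNet) : Prop :=
  Relation.ReflTransGen Step (N.inducedOn Y) M ∧ IsReduced M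

end PhyloNet

namespace PhyloNet

/-- A phylogenetic tree: a network with no reticulations. -/
def IsTree (N : PhyloNet) : Prop := ∀ v, N.indeg v ≤ 1

/-- A shortcut: an edge (u,v) such that there is another directed path from u to v. -/
def HasShortcut (N : PhyloNet) : Prop :=
  ∃ e ∈ N.edges, ∃ l, N.IsWalkFromTo e.1 e.2 l ∧ 3 ≤ l.length

/-- Normal network: tree-child with no shortcut. -/
def IsNormal (N : PhyloNet) : Prop := N.IsTreeChild ∧ ¬ N.HasShortcut

end PhyloNet

open PhyloNet

namespace Aux
open PhyloNet

abbrev Adj (G : PhyloNet) (a b : ℕ) : Prop := (a, b) ∈ G.edges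

abbrev RT (G : PhyloNet) : ℕ → ℕ → Prop := Relation.ReflTransGen (Adj G)

variable {G : PhyloNet}

/-! ### Multiset counting helpers -/

lemma two_le_card_filter {p : ℕ × ℕ → Prop} [DecidablePred p] {s : Multiset (ℕ × ℕ)} {a b : ℕ × ℕ}
    (ha : a ∈ s) (hpa : p a) (hb : b ∈ s) (hpb : p b) (hab : a ≠ b) :
    2 ≤ (s.filter p).card := by
  have ha' : a ∈ s.filter p := Multiset.mem_filter.2 ⟨ha, hpa⟩
  have hb' : b ∈ s.filter p := Multiset.mem_filter.2 ⟨hb, hpb⟩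
  obtain ⟨t, ht⟩ := Multiset.exists_cons_of_mem ha'
  rw [ht] at hb' ⊢
  have hbt : b ∈ t := by
    rcases Multiset.mem_cons.1 hb' with h | h
    · exact absurd h hab.symm
    · exact h
  have : 0 < Multiset.card t := Multiset.card_pos_iff_exists_mem.2 ⟨b, hbt⟩
  simp only [Multiset.card_cons]
  omega

lemma count_le_card_filter {p : ℕ × ℕ → Prop} [DecidablePred p] {s : Multiset (ℕ × ℕ)} {e : ℕ × ℕ} (hp : p e) :
    s.count e ≤ (s.filter p).card := by
  have h1 : s.count e = ((s.filter p).count e) := (Multiset.count_filter_of_pos hp).symm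
  rw [h1]; exact Multiset.count_le_card _ _

lemma count_add_one_le_card_filter {p : ℕ × ℕ → Prop} [DecidablePred p] {s : Multiset (ℕ × ℕ)} {e f : ℕ × ℕ}
    (hf : f ∈ s) (hpf : p f) (hne : f ≠ e) (hpe : p e) :
    s.count e + 1 ≤ (s.filter p).card := by
  have h1 : s.count e = (s.filter p).count e := (Multiset.count_filter_of_pos hpe).symm
  have hf' : f ∈ s.filter p := Multiset.mem_filter.2 ⟨hf, hpf⟩
  have h2 : (s.filter p).count e = ((s.filter p).erase f).count e :=
    (Multiset.count_erase_of_ne (Ne.symm hne) _).symm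
  have h3 : ((s.filter p).erase f).count e ≤ Multiset.card ((s.filter p).erase f) :=
    Multiset.count_le_card _ _
  have h4 : Multiset.card ((s.filter p).erase f) + 1 = Multiset.card (s.filter p) := by
    rw [← Multiset.card_cons, Multiset.cons_erase hf']
  omega

lemma card_filter_cons {p : ℕ × ℕ → Prop} [DecidablePred p] (a : ℕ × ℕ) (s : Multiset (ℕ × ℕ)) :
    (Multiset.filter p (a ::ₘ s)).card = (if p a then 1 else 0) + (Multiset.filter p s).card := by
  rw [Multiset.filter_cons]
  split_ifs <;> simp [Nat.add_comm]

lemma card_filter_erase {p : ℕ × ℕ → Prop} [DecidablePred p] {s : Multiset (ℕ × ℕ)} {e : ℕ × ℕ} (h : e ∈ s) :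
    (Multiset.filter p s).card = (if p e then 1 else 0) + (Multiset.filter p (s.erase e)).card := by
  conv_lhs => rw [← Multiset.cons_erase h]
  exact card_filter_cons e (s.erase e)

/-! ### Edges and degrees -/

lemma exists_in_edge {v : ℕ} (h : 0 < G.indeg v) : ∃ a, (a, v) ∈ G.edges := by
  rw [PhyloNet.indeg, Multiset.card_pos_iff_exists_mem] at h
  obtain ⟨e, he⟩ := h
  obtain ⟨he1, he2⟩ := Multiset.mem_filter.1 he
  exact ⟨e.1, by rwa [← he2, Prod.mk.eta]⟩

lemma exists_out_edge {v : ℕ} (h : 0 < G.outdeg v) : ∃ b, (v, b) ∈ G.edges := by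
  rw [PhyloNet.outdeg, Multiset.card_pos_iff_exists_mem] at h
  obtain ⟨e, he⟩ := h
  obtain ⟨he1, he2⟩ := Multiset.mem_filter.1 he
  exact ⟨e.2, by rwa [← he2, Prod.mk.eta]⟩

lemma outdeg_pos_of_mem {a b : ℕ} (h : (a, b) ∈ G.edges) : 0 < G.outdeg a := by
  rw [PhyloNet.outdeg, Multiset.card_pos_iff_exists_mem]
  exact ⟨(a, b), Multiset.mem_filter.2 ⟨h, rfl⟩⟩

lemma indeg_pos_of_mem {a b : ℕ} (h : (a, b) ∈ G.edges) : 0 < G.indeg b := by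
  rw [PhyloNet.indeg, Multiset.card_pos_iff_exists_mem]
  exact ⟨(a, b), Multiset.mem_filter.2 ⟨h, rfl⟩⟩

lemma in_edge_unique {v a b : ℕ} (h : G.indeg v ≤ 1) (ha : (a, v) ∈ G.edges)
    (hb : (b, v) ∈ G.edges) : a = b := by
  by_contra hne
  have h2 : 2 ≤ (G.edges.filter fun e => e.2 = v).card :=
    two_le_card_filter (p := fun e => e.2 = v) ha rfl hb rfl (by simp [hne])
  rw [PhyloNet.indeg] at h
  omega

lemma out_edge_unique {v a b : ℕ} (h : G.outdeg v ≤ 1) (ha : (v, a) ∈ G.edges)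
    (hb : (v, b) ∈ G.edges) : a = b := by
  by_contra hne
  have h2 : 2 ≤ (G.edges.filter fun e => e.1 = v).card :=
    two_le_card_filter (p := fun e => e.1 = v) ha rfl hb rfl (by simp [hne])
  rw [PhyloNet.outdeg] at h
  omega

/-! ### Walks and reachability -/

lemma walk_singleton (G : PhyloNet) (x : ℕ) : G.IsWalkFromTo x x [x] :=
  ⟨⟨by simp, List.isChain_singleton _⟩, rfl, rfl⟩

lemma walk_snoc {x y b : ℕ} {l : List ℕ} (hw : G.IsWalkFromTo x y l) (h : (y, b) ∈ G.edges) :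
    G.IsWalkFromTo x b (l ++ [b]) := by
  obtain ⟨⟨hne, hch⟩, hh, hl⟩ := hw
  refine ⟨⟨by simp, ?_⟩, ?_, ?_⟩
  · show List.IsChain _ (l ++ [b])
    rw [List.isChain_append]
    refine ⟨hch, List.isChain_singleton _, ?_⟩
    intro p hp q hq
    simp only [List.head?_cons, Option.mem_def, Option.some.injEq] at hq
    rw [hl] at hp
    simp only [Option.mem_def, Option.some.injEq] at hp
    subst hp; subst hq
    exact h
  · rw [List.head?_append_of_ne_nil _ hne]
    exact hh
  · rw [List.getLast?_concat]

lemma walk_cons {a x y : ℕ} {l : List ℕ} (h : (a, x) ∈ G.edges) (hw : G.IsWalkFromTo x y l) :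
    G.IsWalkFromTo a y (a :: l) := by
  obtain ⟨⟨hne, hch⟩, hh, hl⟩ := hw
  refine ⟨⟨by simp, List.isChain_cons.2 ⟨?_, hch⟩⟩, rfl, ?_⟩
  · intro q hq
    rw [hh] at hq
    simp only [Option.mem_def, Option.some.injEq] at hq
    subst hq; exact h
  · cases l with
    | nil => exact absurd rfl hne
    | cons b t => rw [List.getLast?_cons_cons]; exact hl

lemma walk_length_pos {x y : ℕ} {l : List ℕ} (h : G.IsWalkFromTo x y l) : 1 ≤ l.length := by
  cases l with
  | nil => exact absurd rfl h.1.1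
  | cons a t => simp

lemma rtg_of_walk : ∀ {l : List ℕ} {x y : ℕ}, G.IsWalkFromTo x y l → RT G x y := by
  intro l
  induction l with
  | nil => intro x y h; exact absurd rfl h.1.1
  | cons a t ih =>
    intro x y h
    obtain ⟨⟨hne, hch⟩, hh, hl⟩ := h
    have hx : a = x := by simpa using hh
    subst hx
    cases t with
    | nil =>
      have : a = y := by simpa using hl
      exact this ▸ Relation.ReflTransGen.refl
    | cons b t' =>
      have hch' := List.isChain_cons_cons.1 hch
      have hl' : (b :: t').getLast? = some y := by rw [← hl, List.getLast?_cons_cons]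
      exact Relation.ReflTransGen.head hch'.1 (ih ⟨⟨by simp, hch'.2⟩, rfl, hl'⟩)

lemma walk_of_rtg {x y : ℕ} (h : RT G x y) : ∃ l, G.IsWalkFromTo x y l := by
  induction h with
  | refl => exact ⟨[x], walk_singleton G x⟩
  | tail _ h2 ih =>
    obtain ⟨l, hl⟩ := ih
    exact ⟨l ++ [_], walk_snoc hl h2⟩

lemma reaches_iff {x y : ℕ} : G.Reaches x y ↔ RT G x y :=
  ⟨fun ⟨_, hl⟩ => rtg_of_walk hl, walk_of_rtg⟩

lemma shortcut_build' {a b c d : ℕ} (he : (a, b) ∈ G.edges) (h1 : (a, c) ∈ G.edges)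
    (h2 : RT G c d) (h3 : (d, b) ∈ G.edges) : G.HasShortcut := by
  obtain ⟨l, hl⟩ := walk_of_rtg h2
  have hw : G.IsWalkFromTo a b (a :: (l ++ [b])) := walk_cons h1 (walk_snoc hl h3)
  refine ⟨(a, b), he, a :: (l ++ [b]), hw, ?_⟩
  have := walk_length_pos hl
  simp only [List.length_cons, List.length_append, List.length_singleton]
  omega

lemma shortcut_build {a b c : ℕ} (he : (a, b) ∈ G.edges) (h1 : (a, c) ∈ G.edges)
    (h2 : RT G c b) (hcb : c ≠ b) : G.HasShortcut := by
  rcases h2.cases_tail with h | ⟨d, hd1, hd2⟩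
  · exact absurd h.symm hcb
  · exact shortcut_build' he h1 hd1 hd2

def Acy (G : PhyloNet) : Prop := ∀ ⦃a b : ℕ⦄, Adj G a b → ¬ RT G b a

lemma acy_of_no_cycles (h : ∀ v, ¬ ∃ l, G.IsWalkFromTo v v l ∧ 2 ≤ l.length) : Acy G := by
  intro a b hab hba
  obtain ⟨l, hl⟩ := walk_of_rtg hba
  refine h a ⟨a :: l, walk_cons hab hl, ?_⟩
  have := walk_length_pos hl
  simp only [List.length_cons]
  omega

lemma rtg_to_parent {x y p : ℕ} (h : RT G x y) (hxy : x ≠ y) (hp : (p, y) ∈ G.edges)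
    (h1 : G.indeg y ≤ 1) : RT G x p := by
  rcases h.cases_tail with h' | ⟨c, hc, hcy⟩
  · exact absurd h'.symm hxy
  · rwa [in_edge_unique h1 hcy hp] at hc

/-! ### Descent to a leaf -/

lemma descend (G : PhyloNet) (hacy : Acy G)
    (hend : ∀ e ∈ G.edges, e.1 ∈ G.verts ∧ e.2 ∈ G.verts ∧ e.1 ≠ e.2)
    (P : ℕ → Prop)
    (hP : ∀ x ∈ G.verts, P x → G.outdeg x ≠ 0 → ∃ y, (x, y) ∈ G.edges ∧ P y) :
    ∀ x ∈ G.verts, P x → ∃ l, l ∈ G.verts ∧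
      Relation.ReflTransGen (fun a b => (a, b) ∈ G.edges ∧ P b) x l ∧ G.outdeg l = 0 := by
  suffices h : ∀ (n : ℕ) (x), x ∈ G.verts → P x →
      (G.verts.filter fun z => RT G x z).card ≤ n → ∃ l, l ∈ G.verts ∧
      Relation.ReflTransGen (fun a b => (a, b) ∈ G.edges ∧ P b) x l ∧ G.outdeg l = 0 by
    exact fun x hx hPx => h _ x hx hPx le_rfl
  intro n
  induction n with
  | zero =>
    intro x hx hPx hcard
    exfalso
    have : x ∈ G.verts.filter fun z => RT G x z := Finset.mem_filter.2 ⟨hx, .refl⟩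
    have := Finset.card_pos.2 ⟨x, this⟩
    omega
  | succ n ih =>
    intro x hx hPx hcard
    by_cases h0 : G.outdeg x = 0
    · exact ⟨x, hx, .refl, h0⟩
    · obtain ⟨y, hy, hPy⟩ := hP x hx hPx h0
      have hyv : y ∈ G.verts := (hend _ hy).2.1
      have hsubset : (G.verts.filter fun z => RT G y z) ⊆ (G.verts.filter fun z => RT G x z) := by
        intro z hz
        rw [Finset.mem_filter] at hz ⊢
        exact ⟨hz.1, Relation.ReflTransGen.head hy hz.2⟩
      have hxnot : x ∉ (G.verts.filter fun z => RT G y z) := by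
        rw [Finset.mem_filter]
        rintro ⟨-, hyx⟩
        exact hacy hy hyx
      have hssub : (G.verts.filter fun z => RT G y z) ⊂ (G.verts.filter fun z => RT G x z) :=
        (Finset.ssubset_iff_of_subset hsubset).2
          ⟨x, Finset.mem_filter.2 ⟨hx, .refl⟩, hxnot⟩
      have hlt := Finset.card_lt_card hssub
      obtain ⟨l, h1, h2, h3⟩ := ih y hyv hPy (by omega)
      exact ⟨l, h1, .head ⟨hy, hPy⟩ h2, h3⟩

/-! ### Two indeg-one chains ending at the same vertex -/

lemma chains_meet {t : ℕ} :
    ∀ {x : ℕ}, Relation.ReflTransGen (fun a b => (a, b) ∈ G.edges ∧ G.indeg b ≤ 1) x t →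
      G.indeg x ≤ 1 →
      ∀ {x' : ℕ}, Relation.ReflTransGen (fun a b => (a, b) ∈ G.edges ∧ G.indeg b ≤ 1) x' t →
      RT G x x' ∨ RT G x' x := by
  intro x h
  induction h using Relation.ReflTransGen.head_induction_on with
  | refl =>
    intro _ x' h'
    exact Or.inr (Relation.ReflTransGen.mono (fun a b hab => hab.1) _ _ h')
  | head h1 h2 ih =>
    rename_i a c
    intro _ x' hx'
    rcases ih h1.2 hx' with h | h
    · exact Or.inl (.head h1.1 h)
    · by_cases hxc : x' = c
      · exact Or.inl (hxc ▸ Relation.ReflTransGen.single h1.1)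
      · exact Or.inr (rtg_to_parent h hxc h1.1 h1.2)

end Aux
namespace Aux
open PhyloNet

variable {G G' : PhyloNet}

lemma pair_ne_fst {a b c d : ℕ} (h : a ≠ c) : (a, b) ≠ (c, d) :=
  fun he => h (congrArg Prod.fst he)

lemma pair_ne_snd {a b c d : ℕ} (h : b ≠ d) : (a, b) ≠ (c, d) :=
  fun he => h (congrArg Prod.snd he)

/-- The collection of invariants preserved by reduction steps. -/
structure Inv (u ub p1 r : ℕ) (G : PhyloNet) : Prop where
  ends : ∀ e ∈ G.edges, e.1 ∈ G.verts ∧ e.2 ∈ G.verts ∧ e.1 ≠ e.2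
  acy : Acy G
  leaf0 : ∀ v ∈ G.verts, G.outdeg v = 0 → v = u ∨ v = ub
  out2 : ∀ v, G.outdeg v ≤ 2
  outU : G.outdeg u = 0
  outUb : G.outdeg ub = 0
  inU : G.indeg u = 1
  inUb : G.indeg ub = 1
  outR : G.outdeg r = 1
  inR : G.indeg r = 2
  eP : (p1, r) ∈ G.edges
  hz : ∃ z, z ≠ r ∧ (p1, z) ∈ G.edges ∧ ¬ RT G z r

lemma inv_step {u ub p1 r : ℕ} (hs : Step G G') (hi : Inv u ub p1 r G) :
    Inv u ub p1 r G' := by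
  obtain ⟨z, hzr, hez, hzreach⟩ := hi.hz
  have houtp1 : 2 ≤ G.outdeg p1 :=
    two_le_card_filter (p := fun e => e.1 = p1) hi.eP rfl hez rfl
      (pair_ne_snd (Ne.symm hzr))
  rcases hs with ⟨q, v, w, hvv, hvroot, hin1, hout1, hqv, hvw, hverts, hroot, hedges⟩ |
    ⟨x0, w0, hcnt, hverts, hroot, hedges⟩
  · -- suppression of v
    have hqv_ne : q ≠ v := (hi.ends _ hqv).2.2
    have hvw_ne : v ≠ w := (hi.ends _ hvw).2.2
    have hqw_ne : q ≠ w := by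
      intro h
      subst h
      exact hi.acy hqv (Relation.ReflTransGen.single hvw)
    have hvwqv : ((v, w) : ℕ × ℕ) ≠ (q, v) := pair_ne_snd (Ne.symm hvw_ne)
    have hvw' : (v, w) ∈ G.edges.erase (q, v) := (Multiset.mem_erase_of_ne hvwqv).2 hvw
    have hkey : ∀ (p : ℕ × ℕ → Prop) [DecidablePred p],
        (Multiset.filter p G'.edges).card + (if p (q, v) then 1 else 0)
          + (if p (v, w) then 1 else 0)
        = (Multiset.filter p G.edges).card + (if p (q, w) then 1 else 0) := by
      intro p _
      rw [hedges, card_filter_cons, card_filter_erase (p := p) hqv,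
        card_filter_erase (p := p) hvw']
      omega
    have hkey_in : ∀ t, G'.indeg t + (if v = t then 1 else 0) + (if w = t then 1 else 0)
        = G.indeg t + (if w = t then 1 else 0) := fun t => hkey (fun e => e.2 = t)
    have hkey_out : ∀ t, G'.outdeg t + (if q = t then 1 else 0) + (if v = t then 1 else 0)
        = G.outdeg t + (if q = t then 1 else 0) := fun t => hkey (fun e => e.1 = t)
    have hind : ∀ t, t ≠ v → G'.indeg t = G.indeg t := by
      intro t ht
      have h := hkey_in t
      rw [if_neg (fun h' => ht h'.symm)] at h
      omega
    have houtle : ∀ t, G'.outdeg t ≤ G.outdeg t := by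
      intro t
      have h := hkey_out t
      omega
    have houtd : ∀ t, t ≠ v → G'.outdeg t = G.outdeg t := by
      intro t ht
      have h := hkey_out t
      rw [if_neg (show ¬ v = t from fun h' => ht h'.symm)] at h
      omega
    have hvu : v ≠ u := fun h => by rw [h, hi.outU] at hout1; omega
    have hvub : v ≠ ub := fun h => by rw [h, hi.outUb] at hout1; omega
    have hvr : v ≠ r := fun h => by rw [h, hi.inR] at hin1; omega
    have hvp1 : v ≠ p1 := fun h => by rw [h] at hout1; omega
    have hmemE' : ∀ e : ℕ × ℕ, e ∈ G'.edges → e = (q, w) ∨ e ∈ G.edges := by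
      intro e he
      rw [hedges] at he
      rcases Multiset.mem_cons.1 he with h | h
      · exact Or.inl h
      · exact Or.inr (Multiset.mem_of_mem_erase (Multiset.mem_of_mem_erase h))
    have hlift : ∀ {a b : ℕ}, RT G' a b → RT G a b := by
      intro a b h
      induction h with
      | refl => exact .refl
      | tail h1 h2 ih =>
        refine ih.trans ?_
        rcases hmemE' _ h2 with h | h
        · rw [Prod.ext_iff] at h
          obtain ⟨h3, h4⟩ := h
          subst h3; subst h4
          exact Relation.ReflTransGen.head hqv (Relation.ReflTransGen.single hvw)
        · exact Relation.ReflTransGen.single h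
    have hcnt_vw : G.edges.count (v, w) ≤ G.outdeg v :=
      count_le_card_filter (p := fun e => e.1 = v) rfl
    have hcnt_qv : G.edges.count (q, v) ≤ G.indeg v :=
      count_le_card_filter (p := fun e => e.2 = v) rfl
    have hnotv : ∀ e : ℕ × ℕ, e ∈ G'.edges → e ≠ (q, w) → e.1 ≠ v ∧ e.2 ≠ v := by
      intro e he hne
      have he2 : e ∈ (G.edges.erase (q, v)).erase (v, w) := by
        rw [hedges] at he
        rcases Multiset.mem_cons.1 he with h | h
        · exact absurd h hne
        · exact h
      have heG : e ∈ G.edges := Multiset.mem_of_mem_erase (Multiset.mem_of_mem_erase he2)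
      constructor
      · intro h1
        have h2 : e.2 = w := out_edge_unique (v := v) (le_of_eq hout1)
          (by rwa [← h1, Prod.mk.eta]) hvw
        have hevw : e = (v, w) := by rw [Prod.ext_iff]; exact ⟨h1, h2⟩
        rw [hevw] at he2
        have h5 : ((G.edges.erase (q, v)).erase (v, w)).count (v, w) = 0 := by
          rw [Multiset.count_erase_self, Multiset.count_erase_of_ne hvwqv]
          omega
        rw [← Multiset.count_pos] at he2
        omega
      · intro h2
        have h1 : e.1 = q := in_edge_unique (v := v) (le_of_eq hin1)
          (by rwa [← h2, Prod.mk.eta]) hqv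
        have heqv : e = (q, v) := by rw [Prod.ext_iff]; exact ⟨h1, h2⟩
        rw [heqv] at he2
        have h6 : ((G.edges.erase (q, v)).erase (v, w)).count (q, v)
            ≤ (G.edges.erase (q, v)).count (q, v) :=
          Multiset.count_le_of_le _ (Multiset.erase_le _ _)
        have h7 := Multiset.count_erase_self (q, v) G.edges
        rw [← Multiset.count_pos] at he2
        omega
    refine ⟨?_, ?_, ?_, ?_, ?_, ?_, ?_, ?_, ?_, ?_, ?_, ?_⟩
    · -- ends
      intro e he
      rw [hverts]
      by_cases heq : e = (q, w)
      · subst heq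
        exact ⟨Finset.mem_erase.2 ⟨hqv_ne, (hi.ends _ hqv).1⟩,
          Finset.mem_erase.2 ⟨fun h => hvw_ne h.symm, (hi.ends _ hvw).2.1⟩, hqw_ne⟩
      · have heG : e ∈ G.edges := by
          rcases hmemE' _ he with h | h
          · exact absurd h heq
          · exact h
        obtain ⟨h1, h2⟩ := hnotv e he heq
        exact ⟨Finset.mem_erase.2 ⟨h1, (hi.ends _ heG).1⟩,
          Finset.mem_erase.2 ⟨h2, (hi.ends _ heG).2.1⟩, (hi.ends _ heG).2.2⟩
    · -- acy
      intro a b hab hba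
      rcases hmemE' _ hab with h | h
      · rw [Prod.ext_iff] at h
        obtain ⟨h3, h4⟩ := h
        subst h3; subst h4
        exact hi.acy hqv (Relation.ReflTransGen.head hvw (hlift hba))
      · exact hi.acy h (hlift hba)
    · -- leaf0
      intro t ht h0
      rw [hverts, Finset.mem_erase] at ht
      exact hi.leaf0 t ht.2 (by rw [← houtd t ht.1]; exact h0)
    · exact fun t => le_trans (houtle t) (hi.out2 t)
    · rw [houtd u (Ne.symm hvu)]; exact hi.outU
    · rw [houtd ub (Ne.symm hvub)]; exact hi.outUb
    · rw [hind u (Ne.symm hvu)]; exact hi.inU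
    · rw [hind ub (Ne.symm hvub)]; exact hi.inUb
    · rw [houtd r (Ne.symm hvr)]; exact hi.outR
    · rw [hind r (Ne.symm hvr)]; exact hi.inR
    · -- eP
      rw [hedges]
      refine Multiset.mem_cons_of_mem ?_
      rw [Multiset.mem_erase_of_ne (pair_ne_fst (Ne.symm hvp1)),
        Multiset.mem_erase_of_ne (pair_ne_snd (Ne.symm hvr))]
      exact hi.eP
    · -- hz
      by_cases hvz : v = z
      · subst hvz
        have hqp1 : q = p1 := in_edge_unique (le_of_eq hin1) hqv hez
        subst hqp1
        refine ⟨w, ?_, ?_, ?_⟩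
        · intro h; subst h
          exact hzreach (Relation.ReflTransGen.single hvw)
        · rw [hedges]; exact Multiset.mem_cons_self _ _
        · intro h
          exact hzreach (Relation.ReflTransGen.head hvw (hlift h))
      · refine ⟨z, hzr, ?_, fun h => hzreach (hlift h)⟩
        rw [hedges]
        refine Multiset.mem_cons_of_mem ?_
        rw [Multiset.mem_erase_of_ne (pair_ne_fst (Ne.symm hvp1)),
          Multiset.mem_erase_of_ne (pair_ne_snd (fun h => hvz h.symm))]
        exact hez
  · -- collapse of a double edge (x0, w0)
    have hmem : (x0, w0) ∈ G.edges := by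
      rw [← Multiset.count_pos]; omega
    have hkey : ∀ (p : ℕ × ℕ → Prop) [DecidablePred p],
        (Multiset.filter p G'.edges).card + (if p (x0, w0) then 1 else 0)
        = (Multiset.filter p G.edges).card := by
      intro p _
      rw [hedges]
      have := card_filter_erase (p := p) (s := G.edges) hmem
      omega
    have hkey_in : ∀ t, G'.indeg t + (if w0 = t then 1 else 0) = G.indeg t :=
      fun t => hkey (fun e => e.2 = t)
    have hkey_out : ∀ t, G'.outdeg t + (if x0 = t then 1 else 0) = G.outdeg t :=
      fun t => hkey (fun e => e.1 = t)
    have hind : ∀ t, t ≠ w0 → G'.indeg t = G.indeg t := by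
      intro t ht
      have h := hkey_in t
      rw [if_neg (fun h' => ht h'.symm)] at h
      omega
    have houtd : ∀ t, t ≠ x0 → G'.outdeg t = G.outdeg t := by
      intro t ht
      have h := hkey_out t
      rw [if_neg (fun h' => ht h'.symm)] at h
      omega
    have hco : G.edges.count (x0, w0) ≤ G.outdeg x0 :=
      count_le_card_filter (p := fun e => e.1 = x0) rfl
    have hci : G.edges.count (x0, w0) ≤ G.indeg w0 :=
      count_le_card_filter (p := fun e => e.2 = w0) rfl
    have hout2x0 : 2 ≤ G.outdeg x0 := by omega
    have hw0u : w0 ≠ u := by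
      intro h; rw [h] at hci hcnt; rw [hi.inU] at hci; omega
    have hw0ub : w0 ≠ ub := by
      intro h; rw [h] at hci hcnt; rw [hi.inUb] at hci; omega
    have hx0r : x0 ≠ r := by
      intro h; rw [h] at hco hcnt; rw [hi.outR] at hco; omega
    have hx0u : x0 ≠ u := by
      intro h; rw [h] at hco hcnt; rw [hi.outU] at hco; omega
    have hx0ub : x0 ≠ ub := by
      intro h; rw [h] at hco hcnt; rw [hi.outUb] at hco; omega
    have hx0p1 : x0 ≠ p1 := by
      intro h
      rw [h] at hcnt
      by_cases hwr : w0 = r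
      · rw [hwr] at hcnt
        have h3 : G.edges.count (p1, r) + 1 ≤ G.outdeg p1 :=
          count_add_one_le_card_filter (p := fun e => e.1 = p1)
            hez rfl (pair_ne_snd hzr) rfl
        have h4 := hi.out2 p1
        omega
      · have h3 : G.edges.count (p1, w0) + 1 ≤ G.outdeg p1 :=
          count_add_one_le_card_filter (p := fun e => e.1 = p1)
            hi.eP rfl (pair_ne_snd (fun h => hwr h.symm)) rfl
        have h4 := hi.out2 p1
        omega
    have hw0r : w0 ≠ r := by
      intro h
      rw [h] at hcnt
      have h3 : G.edges.count (x0, r) + 1 ≤ G.indeg r :=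
        count_add_one_le_card_filter (p := fun e => e.2 = r)
          hi.eP rfl (pair_ne_fst (fun h => hx0p1 h.symm)) rfl
      have h4 := hi.inR
      omega
    have hsub : ∀ e : ℕ × ℕ, e ∈ G'.edges → e ∈ G.edges := by
      intro e he
      rw [hedges] at he
      exact Multiset.mem_of_mem_erase he
    have hlift : ∀ {a b : ℕ}, RT G' a b → RT G a b :=
      fun h => Relation.ReflTransGen.mono (fun a b hab => hsub _ hab) _ _ h
    refine ⟨?_, ?_, ?_, ?_, ?_, ?_, ?_, ?_, ?_, ?_, ?_, ?_⟩
    · intro e he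
      rw [hverts]
      exact hi.ends _ (hsub _ he)
    · intro a b hab hba
      exact hi.acy (hsub _ hab) (hlift hba)
    · intro t ht h0
      rw [hverts] at ht
      by_cases htx : t = x0
      · subst htx
        have := hkey_out t
        rw [if_pos rfl] at this
        omega
      · exact hi.leaf0 t ht (by rw [← houtd t htx]; exact h0)
    · intro t
      have h := hkey_out t
      have := hi.out2 t
      omega
    · rw [houtd u (Ne.symm hx0u)]; exact hi.outU
    · rw [houtd ub (Ne.symm hx0ub)]; exact hi.outUb
    · rw [hind u (Ne.symm hw0u)]; exact hi.inU
    · rw [hind ub (Ne.symm hw0ub)]; exact hi.inUb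
    · rw [houtd r (Ne.symm hx0r)]; exact hi.outR
    · rw [hind r (Ne.symm hw0r)]; exact hi.inR
    · rw [hedges]
      rw [Multiset.mem_erase_of_ne (pair_ne_fst (Ne.symm hx0p1))]
      exact hi.eP
    · refine ⟨z, hzr, ?_, fun h => hzreach (hlift h)⟩
      rw [hedges]
      rw [Multiset.mem_erase_of_ne (pair_ne_fst (Ne.symm hx0p1))]
      exact hez

lemma inv_rtg {u ub p1 r : ℕ} {A B : PhyloNet} (h : Relation.ReflTransGen Step A B)
    (hi : Inv u ub p1 r A) : Inv u ub p1 r B := by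
  induction h with
  | refl => exact hi
  | tail _ hstep ih => exact inv_step hstep ih

end Aux
namespace Aux
open PhyloNet

variable {M : PhyloNet}

/-- A reduced normal network satisfying the invariants cannot exist. -/
lemma final {u ub p1 r : ℕ} (_huu : u ≠ ub) (hi : Inv u ub p1 r M)
    (hred : IsReduced M) (htc : M.IsTreeChild) (hns : ¬ M.HasShortcut) : False := by
  -- no double edges
  have hnd : ∀ e : ℕ × ℕ, M.edges.count e ≤ 1 := by
    intro e
    by_contra h
    exact hred ⟨M.verts, M.edges.erase (e.1, e.2), M.root⟩
      (Or.inr ⟨e.1, e.2, by rw [Prod.mk.eta]; omega, rfl, rfl, rfl⟩)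
  -- the two distinct parents of r
  obtain ⟨a, b, hab, har, hbr⟩ :
      ∃ a b, a ≠ b ∧ (a, r) ∈ M.edges ∧ (b, r) ∈ M.edges := by
    have h2 : (M.edges.filter fun e => e.2 = r).card = 2 := hi.inR
    obtain ⟨e1, e2, hee⟩ := Multiset.card_eq_two.1 h2
    have he1 : e1 ∈ M.edges.filter fun e => e.2 = r := by rw [hee]; simp
    have he2 : e2 ∈ M.edges.filter fun e => e.2 = r := by
      rw [hee]; simp
    obtain ⟨he1e, he1r⟩ := Multiset.mem_filter.1 he1
    obtain ⟨he2e, he2r⟩ := Multiset.mem_filter.1 he2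
    have hne : e1 ≠ e2 := by
      intro h
      have hcnt : (M.edges.filter fun e => e.2 = r).count e1 = 2 := by
        rw [hee, ← h]
        simp [Multiset.count_cons, Multiset.count_singleton]
      have hle : (M.edges.filter fun e => e.2 = r).count e1 ≤ M.edges.count e1 :=
        Multiset.count_le_of_le _ (Multiset.filter_le _ _)
      have := hnd e1
      omega
    refine ⟨e1.1, e2.1, ?_, by rwa [← he1r, Prod.mk.eta], by rwa [← he2r, Prod.mk.eta]⟩
    intro h
    apply hne
    rw [Prod.ext_iff]
    exact ⟨h, he1r.trans he2r.symm⟩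
  have har_ne : a ≠ r := (hi.ends _ har).2.2
  have hbr_ne : b ≠ r := (hi.ends _ hbr).2.2
  have hrv : r ∈ M.verts := (hi.ends _ har).2.1
  have hav : a ∈ M.verts := (hi.ends _ har).1
  have hbv : b ∈ M.verts := (hi.ends _ hbr).1
  -- tree-child witnesses
  obtain ⟨ed, hedm, hed1, hdind⟩ := htc r hrv (by rw [hi.outR]; omega)
  have hrd : (r, ed.2) ∈ M.edges := by rwa [← hed1, Prod.mk.eta]
  set d := ed.2 with hd
  have hd_ne_r : d ≠ r := by
    intro h
    rw [h] at hdind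
    rw [hi.inR] at hdind
    omega
  have hdv : d ∈ M.verts := (hi.ends _ hrd).2.1
  obtain ⟨ea, heam, hea1, hcaind⟩ := htc a hav (by have := outdeg_pos_of_mem har; omega)
  have haca : (a, ea.2) ∈ M.edges := by rwa [← hea1, Prod.mk.eta]
  set ca := ea.2 with hca
  have hca_ne_r : ca ≠ r := by
    intro h; rw [h, hi.inR] at hcaind; omega
  have hcav : ca ∈ M.verts := (hi.ends _ haca).2.1
  obtain ⟨eb, hebm, heb1, hcbind⟩ := htc b hbv (by have := outdeg_pos_of_mem hbr; omega)
  have hbcb : (b, eb.2) ∈ M.edges := by rwa [← heb1, Prod.mk.eta]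
  set cb := eb.2 with hcb
  have hcb_ne_r : cb ≠ r := by
    intro h; rw [h, hi.inR] at hcbind; omega
  have hcbv : cb ∈ M.verts := (hi.ends _ hbcb).2.1
  -- descents along indeg-≤1 vertices
  have hdesc := descend M hi.acy hi.ends (fun y => M.indeg y ≤ 1) (by
    intro x hx _ h0
    obtain ⟨e, he, he1, hle⟩ := htc x hx h0
    exact ⟨e.2, by rwa [← he1, Prod.mk.eta], hle⟩)
  obtain ⟨lr, hlrv, hlrw, hlr0⟩ := hdesc d hdv hdind
  obtain ⟨la, hlav, hlaw, hla0⟩ := hdesc ca hcav hcaind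
  obtain ⟨lb, hlbv, hlbw, hlb0⟩ := hdesc cb hcbv hcbind
  -- a meeting of two chains yields a contradiction
  have meet_d : ∀ c x : ℕ, (x, c) ∈ M.edges → M.indeg c ≤ 1 → (x, r) ∈ M.edges →
      (RT M d c ∨ RT M c d) → False := by
    intro c x hxc hcind hxr hm
    rcases hm with h | h
    · by_cases hdc : d = c
      · have hrx : r = x := in_edge_unique hcind (hdc ▸ hrd) hxc
        exact (hi.ends _ hxr).2.2 hrx.symm
      · have h2 : RT M d x := rtg_to_parent h hdc hxc hcind
        exact hi.acy hrd (h2.tail hxr)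
    · by_cases hcd : c = d
      · have hrx : r = x := in_edge_unique hdind hrd (hcd ▸ hxc)
        exact (hi.ends _ hxr).2.2 hrx.symm
      · have h2 : RT M c r := rtg_to_parent h hcd hrd hdind
        rcases h2.cases_tail with h3 | ⟨e', he', hee'⟩
        · rw [← h3] at hcind
          have := hi.inR
          omega
        · exact hns (shortcut_build' hxr hxc he' hee')
  have hlr_mem : lr = u ∨ lr = ub := hi.leaf0 lr hlrv hlr0
  have hla_mem : la = u ∨ la = ub := hi.leaf0 la hlav hla0
  have hlb_mem : lb = u ∨ lb = ub := hi.leaf0 lb hlbv hlb0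
  have hne_ra : lr ≠ la := by
    intro h
    rw [h] at hlrw
    exact meet_d ca a haca hcaind har (chains_meet hlrw hdind hlaw)
  have hne_rb : lr ≠ lb := by
    intro h
    rw [h] at hlrw
    exact meet_d cb b hbcb hcbind hbr (chains_meet hlrw hdind hlbw)
  have hlalb : la = lb := by
    rcases hlr_mem with h | h <;> rcases hla_mem with h2 | h2 <;>
      rcases hlb_mem with h3 | h3 <;> simp_all
  -- now the two sibling chains meet
  rw [← hlalb] at hlbw
  have hca_ne_cb : ca ≠ cb := by
    intro h
    exact hab (in_edge_unique hcbind (h ▸ haca) hbcb)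
  rcases chains_meet hlaw hcaind hlbw with h | h
  · have h2 : RT M ca b := rtg_to_parent h hca_ne_cb hbcb hcbind
    exact hns (shortcut_build' har haca h2 hbr)
  · have h2 : RT M cb a := rtg_to_parent h (Ne.symm hca_ne_cb) haca hcaind
    exact hns (shortcut_build' hbr hbcb h2 har)

end Aux

/- STATEMENT 11 (Lemma 2): If N is a normal network that is not a phylogenetic tree, then
there is a 2-element subset Y of its leaves such that N|Y is not normal.  Consequently the
largest closed subclass of the class of normal networks is the class of phylogenetic trees. -/
theorem normal_not_tree_restriction (N : PhyloNet)
    (hN : N.IsPhyloNetwork) (hnormal : N.IsNormal) (hnt : ¬ N.IsTree) :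
    ∃ Y ⊆ N.leaves, Y.card = 2 ∧
      ∀ M, N.IsRestriction Y M → ¬ M.IsNormal := by
  classical
  obtain ⟨hrootv, hends, hnodup, hacyc, hrooti, hrooto, hdeg, hleaf, hreach⟩ := hN
  obtain ⟨htc, hnsc⟩ := hnormal
  have hacy : Aux.Acy N := Aux.acy_of_no_cycles hacyc
  -- classification of vertices of in-degree ≥ 2
  have hclass : ∀ v, 2 ≤ N.indeg v → v ∈ N.verts ∧ N.indeg v = 2 ∧ N.outdeg v = 1 := by
    intro v hv
    have hvv : v ∈ N.verts := by
      obtain ⟨p, hp⟩ := Aux.exists_in_edge (G := N) (v := v) (by omega)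
      exact (hends _ hp).2.1
    have hvroot : v ≠ N.root := by intro h; rw [h, hrooti] at hv; omega
    have hvout : N.outdeg v ≠ 0 := by
      intro h0
      have := hleaf v hvv h0
      omega
    rcases hdeg v hvv hvroot hvout with ⟨h1, _⟩ | ⟨h1, h2⟩
    · omega
    · exact ⟨hvv, h1, h2⟩
  have houtle2 : ∀ v, N.outdeg v ≤ 2 := by
    intro v
    by_cases h0 : N.outdeg v = 0
    · omega
    have hvv : v ∈ N.verts := by
      obtain ⟨w, hw⟩ := Aux.exists_out_edge (G := N) (v := v) (by omega)
      exact (hends _ hw).1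
    by_cases hvr : v = N.root
    · rw [hvr, hrooto]; omega
    · rcases hdeg v hvv hvr h0 with ⟨_, h⟩ | ⟨_, h⟩ <;> omega
  -- a lowest reticulation r
  have hSne : (N.verts.filter fun v => 2 ≤ N.indeg v).Nonempty := by
    rw [PhyloNet.IsTree] at hnt
    push_neg at hnt
    obtain ⟨v, hv⟩ := hnt
    exact ⟨v, Finset.mem_filter.2 ⟨(hclass v (by omega)).1, by omega⟩⟩
  obtain ⟨r, hrS, hrmin⟩ := Finset.exists_min_image (N.verts.filter fun v => 2 ≤ N.indeg v)
    (fun v => (N.verts.filter fun z => Aux.RT N v z).card) hSne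
  have hrverts : r ∈ N.verts := (Finset.mem_filter.1 hrS).1
  have hrin : N.indeg r = 2 := (hclass r (Finset.mem_filter.1 hrS).2).2.1
  have hrout : N.outdeg r = 1 := (hclass r (Finset.mem_filter.1 hrS).2).2.2
  have hlow : ∀ v, Aux.RT N r v → v ≠ r → N.indeg v ≤ 1 := by
    intro v hrv hvr
    by_contra h
    have hvS : v ∈ N.verts.filter fun v => 2 ≤ N.indeg v :=
      Finset.mem_filter.2 ⟨(hclass v (by omega)).1, by omega⟩
    have hle := hrmin v hvS
    have hsubset : (N.verts.filter fun z => Aux.RT N v z)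
        ⊆ (N.verts.filter fun z => Aux.RT N r z) := by
      intro z hz
      rw [Finset.mem_filter] at hz ⊢
      exact ⟨hz.1, hrv.trans hz.2⟩
    have hrnot : r ∉ (N.verts.filter fun z => Aux.RT N v z) := by
      rw [Finset.mem_filter]
      rintro ⟨-, hvr'⟩
      rcases hrv.cases_head with h' | ⟨c, hc1, hc2⟩
      · exact hvr h'.symm
      · exact hacy hc1 (hc2.trans hvr')
    have hssub : (N.verts.filter fun z => Aux.RT N v z)
        ⊂ (N.verts.filter fun z => Aux.RT N r z) :=
      (Finset.ssubset_iff_of_subset hsubset).2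
        ⟨r, Finset.mem_filter.2 ⟨hrverts, .refl⟩, hrnot⟩
    have := Finset.card_lt_card hssub
    omega
  -- parent p1 of r, and its other child c1
  obtain ⟨p1, hp1e⟩ := Aux.exists_in_edge (G := N) (v := r) (by omega)
  have hp1verts : p1 ∈ N.verts := (hends _ hp1e).1
  have hp1root : p1 ≠ N.root := by
    intro h
    rw [h] at hp1e
    obtain ⟨e, he, he1, hle⟩ := htc N.root hrootv (by rw [hrooto]; omega)
    have he' : (N.root, e.2) ∈ N.edges := by rwa [← he1, Prod.mk.eta]
    have : e.2 = r := Aux.out_edge_unique (le_of_eq hrooto) he' hp1e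
    rw [this] at hle
    omega
  have hp1out : N.outdeg p1 = 2 := by
    have h0 : N.outdeg p1 ≠ 0 := by
      have := Aux.outdeg_pos_of_mem hp1e
      omega
    rcases hdeg p1 hp1verts hp1root h0 with ⟨_, h⟩ | ⟨_, h⟩
    · exact h
    · exfalso
      obtain ⟨e, he, he1, hle⟩ := htc p1 hp1verts h0
      have he' : (p1, e.2) ∈ N.edges := by rwa [← he1, Prod.mk.eta]
      have : e.2 = r := Aux.out_edge_unique (le_of_eq h) he' hp1e
      rw [this] at hle
      omega
  obtain ⟨c1, hc1e, hc1r⟩ : ∃ c, (p1, c) ∈ N.edges ∧ c ≠ r := by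
    have hfil2 : (N.edges.filter fun e => e.1 = p1).card = 2 := hp1out
    obtain ⟨e1, e2, hee⟩ := Multiset.card_eq_two.1 hfil2
    have hnd : (N.edges.filter fun e => e.1 = p1).Nodup := hnodup.filter _
    have hne12 : e1 ≠ e2 := by
      rw [hee] at hnd
      simp [Multiset.nodup_cons] at hnd
      exact hnd
    have hp1rf : ((p1, r) : ℕ × ℕ) ∈ N.edges.filter fun e => e.1 = p1 :=
      Multiset.mem_filter.2 ⟨hp1e, rfl⟩
    rw [hee] at hp1rf
    have he1 : e1 ∈ N.edges.filter fun e => e.1 = p1 := by rw [hee]; simp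
    have he2 : e2 ∈ N.edges.filter fun e => e.1 = p1 := by rw [hee]; simp
    obtain ⟨he1e, he1p⟩ := Multiset.mem_filter.1 he1
    obtain ⟨he2e, he2p⟩ := Multiset.mem_filter.1 he2
    rcases Multiset.mem_cons.1 hp1rf with h | h
    · refine ⟨e2.2, by rwa [← he2p, Prod.mk.eta], ?_⟩
      intro hc
      apply hne12
      have he2eq : e2 = (p1, r) := by rw [Prod.ext_iff]; exact ⟨he2p, hc⟩
      rw [he2eq]
      exact h.symm
    · have h' : (p1, r) = e2 := by simpa using h
      refine ⟨e1.2, by rwa [← he1p, Prod.mk.eta], ?_⟩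
      intro hc
      apply hne12
      have he1eq : e1 = (p1, r) := by rw [Prod.ext_iff]; exact ⟨he1p, hc⟩
      rw [he1eq]
      exact h'
  have hc1verts : c1 ∈ N.verts := (hends _ hc1e).2.1
  have hc1_not_r : ¬ Aux.RT N c1 r := fun h =>
    hnsc (Aux.shortcut_build hp1e hc1e h hc1r)
  -- leaves u (below r) and ub (below c1)
  have hdesc := Aux.descend N hacy hends (fun _ => True) (by
    intro x hx _ h0
    obtain ⟨y, hy⟩ := Aux.exists_out_edge (G := N) (v := x) (by omega)
    exact ⟨y, hy, trivial⟩)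
  obtain ⟨u, huverts, hru', hu0⟩ := hdesc r hrverts trivial
  have hru : Aux.RT N r u := Relation.ReflTransGen.mono (fun a b h => h.1) _ _ hru'
  have hur_ne : u ≠ r := by
    intro h
    rw [h, hrout] at hu0
    omega
  obtain ⟨ub, hubverts, hcub', hub0⟩ := hdesc c1 hc1verts trivial
  have hcub : Aux.RT N c1 ub := Relation.ReflTransGen.mono (fun a b h => h.1) _ _ hcub'
  -- every ancestor of u is comparable with r
  have hC : ∀ x, Aux.RT N x u → Aux.RT N r x ∨ Aux.RT N x r := by
    intro x hx
    induction hx using Relation.ReflTransGen.head_induction_on with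
    | refl => exact Or.inl hru
    | head h1 h2 ih =>
      rename_i x' c
      rcases ih with h | h
      · by_cases hcr : c = r
        · exact Or.inr (hcr ▸ Relation.ReflTransGen.single h1)
        · exact Or.inl (Aux.rtg_to_parent h (fun hh => hcr hh.symm) h1 (hlow c h hcr))
      · exact Or.inr (Relation.ReflTransGen.head h1 h)
  have hub_ne_u : ub ≠ u := by
    intro h
    rw [h] at hcub
    rcases hC c1 hcub with h' | h'
    · have hind1 : N.indeg c1 ≤ 1 := hlow c1 h' hc1r
      have := Aux.rtg_to_parent h' (Ne.symm hc1r) hc1e hind1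
      exact hacy hp1e this
    · exact hc1_not_r h'
  -- the pair of leaves
  refine ⟨{u, ub}, ?_, ?_, ?_⟩
  · intro y hy
    rw [Finset.mem_insert, Finset.mem_singleton] at hy
    rcases hy with rfl | rfl
    · exact Finset.mem_filter.2 ⟨huverts, hu0⟩
    · exact Finset.mem_filter.2 ⟨hubverts, hub0⟩
  · rw [Finset.card_insert_of_notMem (by simpa using Ne.symm hub_ne_u),
      Finset.card_singleton]
  · intro M hM hnorm
    obtain ⟨hrtg, hred⟩ := hM
    -- the induced subnetwork satisfies the invariants
    set G0 := N.inducedOn {u, ub} with hG0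
    have hvmem : ∀ v, v ∈ G0.verts ↔ v ∈ N.verts ∧ ∃ y ∈ ({u, ub} : Finset ℕ), N.Reaches v y :=
      fun v => Finset.mem_filter
    have hemem : ∀ e : ℕ × ℕ, e ∈ G0.edges ↔ e ∈ N.edges ∧ e.1 ∈ G0.verts ∧ e.2 ∈ G0.verts := by
      intro e
      exact Multiset.mem_filter
    have hreach_self : ∀ y : ℕ, N.Reaches y y := fun y => ⟨[y], Aux.walk_singleton N y⟩
    have huY : u ∈ ({u, ub} : Finset ℕ) := by simp
    have hubY : ub ∈ ({u, ub} : Finset ℕ) := by simp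
    have huG : u ∈ G0.verts := (hvmem u).2 ⟨huverts, u, huY, hreach_self u⟩
    have hubG : ub ∈ G0.verts := (hvmem ub).2 ⟨hubverts, ub, hubY, hreach_self ub⟩
    have hrG : r ∈ G0.verts := (hvmem r).2 ⟨hrverts, u, huY, Aux.reaches_iff.2 hru⟩
    have hp1G : p1 ∈ G0.verts :=
      (hvmem p1).2 ⟨hp1verts, u, huY, Aux.reaches_iff.2 (Relation.ReflTransGen.head hp1e hru)⟩
    have hc1G : c1 ∈ G0.verts :=
      (hvmem c1).2 ⟨hc1verts, ub, hubY, Aux.reaches_iff.2 hcub⟩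
    have hadj0 : ∀ a b : ℕ, ((a, b) : ℕ × ℕ) ∈ G0.edges → (a, b) ∈ N.edges :=
      fun a b h => ((hemem _).1 h).1
    have hrt0 : ∀ {a b : ℕ}, Aux.RT G0 a b → Aux.RT N a b :=
      fun h => Relation.ReflTransGen.mono (fun a b hab => hadj0 a b hab) _ _ h
    have hindeq : ∀ v ∈ G0.verts, G0.indeg v = N.indeg v := by
      intro v hv
      have hfil : G0.edges.filter (fun e => e.2 = v) = N.edges.filter (fun e => e.2 = v) := by
        rw [hG0]
        show Multiset.filter _ (Multiset.filter _ N.edges) = _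
        rw [Multiset.filter_filter]
        apply Multiset.filter_congr
        intro e he
        constructor
        · exact fun h => h.1
        · intro h
          obtain ⟨hvN, y, hy, hr⟩ := (hvmem v).1 hv
          have hrt : Aux.RT N e.1 y :=
            Relation.ReflTransGen.head (show ((e.1, v) : ℕ × ℕ) ∈ N.edges by
              rwa [← h, Prod.mk.eta]) (Aux.reaches_iff.1 hr)
          refine ⟨h, ?_, ?_⟩
          · exact Finset.mem_filter.2 ⟨(hends _ he).1, y, hy, Aux.reaches_iff.2 hrt⟩
          · rw [h]; exact hv
      show (Multiset.filter _ G0.edges).card = (Multiset.filter _ N.edges).card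
      rw [hfil]
    have houtle : ∀ v, G0.outdeg v ≤ N.outdeg v := by
      intro v
      exact Multiset.card_le_card (Multiset.filter_le_filter _ (Multiset.filter_le _ _))
    have hinv0 : Aux.Inv u ub p1 r G0 := by
      refine ⟨?_, ?_, ?_, ?_, ?_, ?_, ?_, ?_, ?_, ?_, ?_, ?_⟩
      · intro e he
        obtain ⟨heN, h1, h2⟩ := (hemem e).1 he
        exact ⟨h1, h2, (hends e heN).2.2⟩
      · intro a b hab hba
        exact hacy (hadj0 _ _ hab) (hrt0 hba)
      · intro v hv h0
        obtain ⟨hvN, y, hy, hr⟩ := (hvmem v).1 hv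
        have hyuub : y = u ∨ y = ub := by simpa using hy
        rcases (Aux.reaches_iff.1 hr).cases_head with h | ⟨s, hs1, hs2⟩
        · rw [h]; exact hyuub
        · exfalso
          have hsG : s ∈ G0.verts :=
            (hvmem s).2 ⟨(hends _ hs1).2.1, y, hy, Aux.reaches_iff.2 hs2⟩
          have he : ((v, s) : ℕ × ℕ) ∈ G0.edges := (hemem _).2 ⟨hs1, hv, hsG⟩
          have := Aux.outdeg_pos_of_mem he
          omega
      · exact fun v => le_trans (houtle v) (houtle2 v)
      · have := houtle u; omega
      · have := houtle ub; omega
      · rw [hindeq u huG]; exact hleaf u huverts hu0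
      · rw [hindeq ub hubG]; exact hleaf ub hubverts hub0
      · refine le_antisymm (by have := houtle r; omega) ?_
        rcases hru.cases_head with h | ⟨t1, ht1, ht2⟩
        · exact absurd h.symm hur_ne
        · have ht1G : t1 ∈ G0.verts :=
            (hvmem t1).2 ⟨(hends _ ht1).2.1, u, huY, Aux.reaches_iff.2 ht2⟩
          exact Aux.outdeg_pos_of_mem ((hemem _).2 ⟨ht1, hrG, ht1G⟩)
      · rw [hindeq r hrG]; exact hrin
      · exact (hemem _).2 ⟨hp1e, hp1G, hrG⟩
      · exact ⟨c1, hc1r, (hemem _).2 ⟨hc1e, hp1G, hc1G⟩, fun h => hc1_not_r (hrt0 h)⟩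
    have hinvM := Aux.inv_rtg hrtg hinv0
    exact Aux.final (Ne.symm hub_ne_u) hinvM hred hnorm.1 hnorm.2
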